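/- Let M be a positive integer, h > 0, L := M·h, and let v be a grid function on {0,…,M} with v₀ = v_M = 0. Then the discrete L²-norm satisfies ‖v‖ ≤ (L/√6)·|v|₁. -/

import Mathlib

private lemma gauss_Icc (N : ℕ) : ∑ i ∈ Finset.Icc 1 N, (i : ℝ) = N * (N + 1) / 2 := by
  induction N with
  | zero => simp
  | succ n ih =>
    rw [Finset.sum_Icc_succ_top (Nat.succ_le_succ (Nat.zero_le n)), ih]
    push_cast; ring

private lemma sum_weight (N : ℕ) :
    ∑ i ∈ Finset.Icc 1 N, (i : ℝ) * (((N : ℝ) + 1) - i) =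
      ((N : ℝ) + 1) * (((N : ℝ) + 1) ^ 2 - 1) / 6 := by
  induction N with
  | zero => simp
  | succ n ih =>
    rw [Finset.sum_Icc_succ_top (Nat.succ_le_succ (Nat.zero_le n))]
    have expand : ∑ i ∈ Finset.Icc 1 n, (i : ℝ) * (((n : ℝ) + 1 + 1) - i) =
        (∑ i ∈ Finset.Icc 1 n, (i : ℝ) * (((n : ℝ) + 1) - i)) +
          ∑ i ∈ Finset.Icc 1 n, (i : ℝ) := by
      rw [← Finset.sum_add_distrib]
      refine Finset.sum_congr rfl fun i _ => by push_cast; ring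
    push_cast
    rw [expand, ih, gauss_Icc]
    ring

/-- Discrete Poincaré-type inequality: for a grid function `v` on `{0,…,M}` vanishing at
the endpoints, the discrete `L²`-norm `‖v‖ = (h ∑_{i=1}^{M-1} vᵢ²)^{1/2}` is bounded by
`(L/√6)·|v|₁`, where `L = M·h`. -/
theorem stmt_1 (M : ℕ) (hM : 0 < M) (h L : ℝ) (hh : 0 < h) (hL : L = M * h)
    (v : ℕ → ℝ) (hv0 : v 0 = 0) (hvM : v M = 0) :
    Real.sqrt (h * ∑ i ∈ Finset.Icc 1 (M - 1), (v i) ^ 2) ≤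
      L / Real.sqrt 6 *
        Real.sqrt (h * ∑ i ∈ Finset.Icc 1 M, ((v i - v (i - 1)) / h) ^ 2) := by
  set d : ℕ → ℝ := fun j => (v j - v (j - 1)) / h with hd
  have hgoalS : (∑ i ∈ Finset.Icc 1 M, ((v i - v (i - 1)) / h) ^ 2)
      = ∑ i ∈ Finset.Icc 1 M, d i ^ 2 := rfl
  set S : ℝ := ∑ i ∈ Finset.Icc 1 M, d i ^ 2 with hSdef
  have hS0 : 0 ≤ S := Finset.sum_nonneg fun j _ => sq_nonneg _
  have hMpos : (0 : ℝ) < M := by exact_mod_cast hM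
  have hL0 : 0 ≤ L := by rw [hL]; positivity
  -- splitting of sums over Icc 1 M
  have split : ∀ (f : ℕ → ℝ) (i : ℕ), i ≤ M →
      (∑ j ∈ Finset.Icc 1 i, f j) + ∑ j ∈ Finset.Icc (i + 1) M, f j
        = ∑ j ∈ Finset.Icc 1 M, f j := by
    intro f i hi
    have e1 : Finset.Icc 1 i = Finset.Ioc 0 i := by ext x; simp [Nat.lt_iff_add_one_le]
    have e2 : Finset.Icc (i + 1) M = Finset.Ioc i M := by
      ext x; simp only [Finset.mem_Icc, Finset.mem_Ioc]; omega
    have e3 : Finset.Icc 1 M = Finset.Ioc 0 M := by ext x; simp [Nat.lt_iff_add_one_le]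
    rw [e1, e2, e3]
    exact Finset.sum_Ioc_consecutive f (Nat.zero_le i) hi
  -- telescoping
  have tele : ∀ i, i ≤ M → v i = h * ∑ j ∈ Finset.Icc 1 i, d j := by
    intro i
    induction i with
    | zero => intro _; simp [hv0]
    | succ n ih =>
      intro hn
      have ih' := ih (Nat.le_of_succ_le hn)
      have hdn : h * d (n + 1) = v (n + 1) - v n := by
        simp only [hd, Nat.add_sub_cancel]
        field_simp
      rw [Finset.sum_Icc_succ_top (Nat.succ_le_succ (Nat.zero_le n)), mul_add, ← ih', hdn]
      ring
  have total : ∑ j ∈ Finset.Icc 1 M, d j = 0 := by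
    have := tele M le_rfl
    rw [hvM] at this
    exact (mul_eq_zero.1 this.symm).resolve_left hh.ne'
  -- pointwise bound
  have pointwise : ∀ i ∈ Finset.Icc 1 (M - 1),
      v i ^ 2 ≤ h ^ 2 * S / M * ((i : ℝ) * ((M : ℝ) - i)) := by
    intro i hi
    rw [Finset.mem_Icc] at hi
    have hiM : i ≤ M := le_trans hi.2 (Nat.sub_le M 1)
    have hi1M : i + 1 ≤ M := by omega
    have hiMr : (i : ℝ) ≤ M := by exact_mod_cast hiM
    have hMi0 : (0 : ℝ) ≤ (M : ℝ) - i := by linarith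
    set A := ∑ j ∈ Finset.Icc 1 i, d j with hA
    set B := ∑ j ∈ Finset.Icc (i + 1) M, d j with hB
    have hAB : A + B = 0 := by rw [hA, hB, split d i hiM, total]
    have vA : v i = h * A := tele i hiM
    have vB : v i ^ 2 = h ^ 2 * B ^ 2 := by
      have : B = -A := by linarith
      rw [this, vA]; ring
    have CS1 : A ^ 2 ≤ (i : ℝ) * ∑ j ∈ Finset.Icc 1 i, d j ^ 2 := by
      have := sq_sum_le_card_mul_sum_sq (s := Finset.Icc 1 i) (f := d)
      simpa [Nat.card_Icc] using this
    have CS2 : B ^ 2 ≤ ((M : ℝ) - i) * ∑ j ∈ Finset.Icc (i + 1) M, d j ^ 2 := by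
      have := sq_sum_le_card_mul_sum_sq (s := Finset.Icc (i + 1) M) (f := d)
      have hcard : ((Finset.Icc (i + 1) M).card : ℝ) = (M : ℝ) - i := by
        rw [Nat.card_Icc]
        have : M + 1 - (i + 1) = M - i := by omega
        rw [this, Nat.cast_sub hiM]
      rwa [hcard] at this
    set Sig1 := ∑ j ∈ Finset.Icc 1 i, d j ^ 2 with hSig1
    set Sig2 := ∑ j ∈ Finset.Icc (i + 1) M, d j ^ 2 with hSig2
    have hsplitsq : Sig1 + Sig2 = S := by rw [hSig1, hSig2, split (fun j => d j ^ 2) i hiM]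
    have step : (M : ℝ) * v i ^ 2 ≤ h ^ 2 * ((i : ℝ) * ((M : ℝ) - i)) * S := by
      have h1 : ((M : ℝ) - i) * v i ^ 2 ≤ ((M : ℝ) - i) * (h ^ 2 * ((i : ℝ) * Sig1)) := by
        refine mul_le_mul_of_nonneg_left ?_ hMi0
        rw [vA, mul_pow]
        exact mul_le_mul_of_nonneg_left CS1 (sq_nonneg h)
      have h2 : (i : ℝ) * v i ^ 2 ≤ (i : ℝ) * (h ^ 2 * (((M : ℝ) - i) * Sig2)) := by
        refine mul_le_mul_of_nonneg_left ?_ (Nat.cast_nonneg i)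
        rw [vB]
        exact mul_le_mul_of_nonneg_left CS2 (sq_nonneg h)
      calc (M : ℝ) * v i ^ 2 = ((M : ℝ) - i) * v i ^ 2 + (i : ℝ) * v i ^ 2 := by ring
        _ ≤ ((M : ℝ) - i) * (h ^ 2 * ((i : ℝ) * Sig1))
            + (i : ℝ) * (h ^ 2 * (((M : ℝ) - i) * Sig2)) := add_le_add h1 h2
        _ = h ^ 2 * ((i : ℝ) * ((M : ℝ) - i)) * (Sig1 + Sig2) := by ring
        _ = h ^ 2 * ((i : ℝ) * ((M : ℝ) - i)) * S := by rw [hsplitsq]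
    have : v i ^ 2 ≤ h ^ 2 * ((i : ℝ) * ((M : ℝ) - i)) * S / M := by
      rw [le_div_iff₀ hMpos]
      linarith [step]
    calc v i ^ 2 ≤ h ^ 2 * ((i : ℝ) * ((M : ℝ) - i)) * S / M := this
      _ = h ^ 2 * S / M * ((i : ℝ) * ((M : ℝ) - i)) := by ring
  -- sum the pointwise bounds
  set T := ∑ i ∈ Finset.Icc 1 (M - 1), v i ^ 2 with hT
  have hT0 : 0 ≤ T := Finset.sum_nonneg fun j _ => sq_nonneg _
  have hsumw : ∑ i ∈ Finset.Icc 1 (M - 1), (i : ℝ) * ((M : ℝ) - i) ≤ (M : ℝ) ^ 3 / 6 := by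
    have key := sum_weight (M - 1)
    have hcast : ((M - 1 : ℕ) : ℝ) + 1 = (M : ℝ) := by
      rw [Nat.cast_sub hM]; ring
    rw [hcast] at key
    rw [key]
    nlinarith [hMpos]
  have h2 : T ≤ h ^ 2 * S / M * ∑ i ∈ Finset.Icc 1 (M - 1), (i : ℝ) * ((M : ℝ) - i) := by
    rw [Finset.mul_sum]
    exact Finset.sum_le_sum pointwise
  have h3 : T ≤ h ^ 2 * S / M * ((M : ℝ) ^ 3 / 6) :=
    le_trans h2 (mul_le_mul_of_nonneg_left hsumw (by positivity))
  have h4 : h * T ≤ L ^ 2 / 6 * (h * S) := by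
    rw [hL]
    calc h * T ≤ h * (h ^ 2 * S / M * ((M : ℝ) ^ 3 / 6)) :=
          mul_le_mul_of_nonneg_left h3 hh.le
      _ = ((M : ℝ) * h) ^ 2 / 6 * (h * S) := by field_simp
  rw [hgoalS]
  calc Real.sqrt (h * T) ≤ Real.sqrt (L ^ 2 / 6 * (h * S)) := Real.sqrt_le_sqrt h4
    _ = L / Real.sqrt 6 * Real.sqrt (h * S) := by
        have h6 : (0 : ℝ) < Real.sqrt 6 := Real.sqrt_pos.2 (by norm_num)
        have : L ^ 2 / 6 = (L / Real.sqrt 6) ^ 2 := by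
          rw [div_pow, Real.sq_sqrt (by norm_num : (0:ℝ) ≤ 6)]
        rw [this, Real.sqrt_mul (by positivity),
          Real.sqrt_sq (by positivity)]
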